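/- Let Φ(u₀,u₁,u₂,u₃) = u₁u₂/(u₁²u₂² − u₀u₂³ − u₁³u₃ + u₀u₁u₂u₃). Then, writing ∇Φ for the gradient with respect to (u₀,u₁,u₂,u₃) and MLEᵢ = −(∂Φ/∂uᵢ)/Φ, the identity MLE₀ · MLE₃ = Φ holds as rational functions; i.e., Φ solves the homaloidal PDE Φ = F(−∇ log Φ) for F = x₀x₃. -/

import Mathlib

/-- `Φ(u₀,u₁,u₂,u₃) = u₁u₂/(u₁²u₂² − u₀u₂³ − u₁³u₃ + u₀u₁u₂u₃)`. -/
noncomputable def Phi10 (u0 u1 u2 u3 : ℂ) : ℂ :=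
  u1 * u2 / (u1 ^ 2 * u2 ^ 2 - u0 * u2 ^ 3 - u1 ^ 3 * u3 + u0 * u1 * u2 * u3)

lemma deriv0 (u0 u1 u2 u3 : ℂ)
    (hden : u1 ^ 2 * u2 ^ 2 - u0 * u2 ^ 3 - u1 ^ 3 * u3 + u0 * u1 * u2 * u3 ≠ 0) :
    deriv (fun t => Phi10 t u1 u2 u3) u0 =
      -(u1 * u2) * (-(u2 ^ 3) + u1 * u2 * u3) /
        (u1 ^ 2 * u2 ^ 2 - u0 * u2 ^ 3 - u1 ^ 3 * u3 + u0 * u1 * u2 * u3) ^ 2 := by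
  have hd : HasDerivAt (fun t : ℂ => u1 ^ 2 * u2 ^ 2 - t * u2 ^ 3 - u1 ^ 3 * u3 + t * (u1 * u2 * u3))
      (-(u2 ^ 3) + u1 * u2 * u3) u0 := by
    have := (((hasDerivAt_const u0 (u1 ^ 2 * u2 ^ 2)).sub
      ((hasDerivAt_id u0).mul_const (u2 ^ 3))).sub
      (hasDerivAt_const u0 (u1 ^ 3 * u3))).add ((hasDerivAt_id u0).mul_const (u1 * u2 * u3))
    simpa [Pi.sub_def, Pi.add_def] using this
  have h := ((hasDerivAt_const u0 (u1 * u2)).div hd (by ring_nf; ring_nf at hden; exact hden)).deriv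
  have heq : (fun t : ℂ => Phi10 t u1 u2 u3) =
      fun t => (u1 * u2) / (u1 ^ 2 * u2 ^ 2 - t * u2 ^ 3 - u1 ^ 3 * u3 + t * (u1 * u2 * u3)) := by
    funext t; simp [Phi10]; ring_nf
  simp only [Pi.div_def] at h
  rw [heq, h]
  ring_nf

lemma deriv3 (u0 u1 u2 u3 : ℂ)
    (hden : u1 ^ 2 * u2 ^ 2 - u0 * u2 ^ 3 - u1 ^ 3 * u3 + u0 * u1 * u2 * u3 ≠ 0) :
    deriv (fun t => Phi10 u0 u1 u2 t) u3 =
      -(u1 * u2) * (-(u1 ^ 3) + u0 * u1 * u2) /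
        (u1 ^ 2 * u2 ^ 2 - u0 * u2 ^ 3 - u1 ^ 3 * u3 + u0 * u1 * u2 * u3) ^ 2 := by
  have hd : HasDerivAt (fun t : ℂ => u1 ^ 2 * u2 ^ 2 - u0 * u2 ^ 3 - t * u1 ^ 3 + t * (u0 * u1 * u2))
      (-(u1 ^ 3) + u0 * u1 * u2) u3 := by
    have := (((hasDerivAt_const u3 (u1 ^ 2 * u2 ^ 2 - u0 * u2 ^ 3)).sub
      ((hasDerivAt_id u3).mul_const (u1 ^ 3))).add ((hasDerivAt_id u3).mul_const (u0 * u1 * u2)))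
    simpa [sub_sub, Pi.sub_def, Pi.add_def] using this
  have h := ((hasDerivAt_const u3 (u1 * u2)).div hd (by ring_nf; ring_nf at hden; exact hden)).deriv
  have heq : (fun t : ℂ => Phi10 u0 u1 u2 t) =
      fun t => (u1 * u2) / (u1 ^ 2 * u2 ^ 2 - u0 * u2 ^ 3 - t * u1 ^ 3 + t * (u0 * u1 * u2)) := by
    funext t; simp [Phi10]; ring_nf
  simp only [Pi.div_def] at h
  rw [heq, h]
  ring_nf

/-- With `MLEᵢ = −(∂Φ/∂uᵢ)/Φ`, the identity `MLE₀ · MLE₃ = Φ` holds; i.e. `Φ` solves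
the homaloidal PDE `Φ = F(−∇ log Φ)` for `F = x₀x₃`. -/
theorem twisted_cubic_homaloidal (u0 u1 u2 u3 : ℂ)
    (hden : u1 ^ 2 * u2 ^ 2 - u0 * u2 ^ 3 - u1 ^ 3 * u3 + u0 * u1 * u2 * u3 ≠ 0)
    (hnum : u1 * u2 ≠ 0) :
    (-(deriv (fun t => Phi10 t u1 u2 u3) u0) / Phi10 u0 u1 u2 u3) *
      (-(deriv (fun t => Phi10 u0 u1 u2 t) u3) / Phi10 u0 u1 u2 u3)
      = Phi10 u0 u1 u2 u3 := by
  rw [deriv0 u0 u1 u2 u3 hden, deriv3 u0 u1 u2 u3 hden, Phi10]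
  have h1 : u1 ≠ 0 := left_ne_zero_of_mul hnum
  have h2 : u2 ≠ 0 := right_ne_zero_of_mul hnum
  have key : (u2 ^ 2 - u1 * u3) * (u1 ^ 2 - u0 * u2) = u1 ^ 2 * u2 ^ 2 - u0 * u2 ^ 3 - u1 ^ 3 * u3 + u0 * u1 * u2 * u3 := by ring
  rw [← key] at hden ⊢
  have h3 := left_ne_zero_of_mul hden
  have h4 := right_ne_zero_of_mul hden
  have e1 : -(u2 ^ 3) + u1 * u2 * u3 = -(u2 * (u2 ^ 2 - u1 * u3)) := by ring
  have e2 : -(u1 ^ 3) + u0 * u1 * u2 = -(u1 * (u1 ^ 2 - u0 * u2)) := by ring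
  rw [e1, e2]
  field_simp
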